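/- Let A, B : ℝ^m → O(m) be maps such that A(x) = I whenever ‖x‖ ≥ 1 and B(y) = I whenever ‖y‖ ≥ 1. Then the Milnor–Munkres commutator μ = Ψ_B⁻¹ ∘ Φ_A⁻¹ ∘ Ψ_B ∘ Φ_A is compactly supported: μ(x,y) = (x,y) for every point (x,y) with ‖x‖ > 1 or ‖y‖ > 1. -/

import Mathlib

open Matrix

/-- `Φ_A (x, y) = (x, A(x) y)` for a map `A : ℝ^m → O(m)`. -/
noncomputable def PhiMap (m : ℕ)
    (A : EuclideanSpace ℝ (Fin m) → Matrix.orthogonalGroup (Fin m) ℝ) :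
    (EuclideanSpace ℝ (Fin m) × EuclideanSpace ℝ (Fin m)) →
      (EuclideanSpace ℝ (Fin m) × EuclideanSpace ℝ (Fin m)) :=
  fun p => (p.1, WithLp.toLp 2 ((A p.1 : Matrix (Fin m) (Fin m) ℝ).mulVec p.2))

/-- `Ψ_B (x, y) = (B(y) x, y)` for a map `B : ℝ^m → O(m)`. -/
noncomputable def PsiMap (m : ℕ)
    (B : EuclideanSpace ℝ (Fin m) → Matrix.orthogonalGroup (Fin m) ℝ) :
    (EuclideanSpace ℝ (Fin m) × EuclideanSpace ℝ (Fin m)) →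
      (EuclideanSpace ℝ (Fin m) × EuclideanSpace ℝ (Fin m)) :=
  fun p => (WithLp.toLp 2 ((B p.2 : Matrix (Fin m) (Fin m) ℝ).mulVec p.1), p.2)

/-- The inverse `Φ_A⁻¹ (x, y) = (x, A(x)⁻¹ y)` of `Φ_A`. -/
noncomputable def PhiMapInv (m : ℕ)
    (A : EuclideanSpace ℝ (Fin m) → Matrix.orthogonalGroup (Fin m) ℝ) :
    (EuclideanSpace ℝ (Fin m) × EuclideanSpace ℝ (Fin m)) →
      (EuclideanSpace ℝ (Fin m) × EuclideanSpace ℝ (Fin m)) :=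
  fun p => (p.1, WithLp.toLp 2 (((A p.1)⁻¹ : Matrix (Fin m) (Fin m) ℝ).mulVec p.2))

/-- The inverse `Ψ_B⁻¹ (x, y) = (B(y)⁻¹ x, y)` of `Ψ_B`. -/
noncomputable def PsiMapInv (m : ℕ)
    (B : EuclideanSpace ℝ (Fin m) → Matrix.orthogonalGroup (Fin m) ℝ) :
    (EuclideanSpace ℝ (Fin m) × EuclideanSpace ℝ (Fin m)) →
      (EuclideanSpace ℝ (Fin m) × EuclideanSpace ℝ (Fin m)) :=
  fun p => (WithLp.toLp 2 (((B p.2)⁻¹ : Matrix (Fin m) (Fin m) ℝ).mulVec p.1), p.2)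

/-- The Milnor–Munkres commutator `μ = Ψ_B⁻¹ ∘ Φ_A⁻¹ ∘ Ψ_B ∘ Φ_A`. -/
noncomputable def mmCommutator (m : ℕ)
    (A B : EuclideanSpace ℝ (Fin m) → Matrix.orthogonalGroup (Fin m) ℝ) :
    (EuclideanSpace ℝ (Fin m) × EuclideanSpace ℝ (Fin m)) →
      (EuclideanSpace ℝ (Fin m) × EuclideanSpace ℝ (Fin m)) :=
  PsiMapInv m B ∘ PhiMapInv m A ∘ PsiMap m B ∘ PhiMap m A

/-- If `A(x) = I` whenever `‖x‖ ≥ 1` and `B(y) = I` whenever `‖y‖ ≥ 1`, then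
the Milnor–Munkres commutator `μ = Ψ_B⁻¹ ∘ Φ_A⁻¹ ∘ Ψ_B ∘ Φ_A` is compactly
supported: `μ(x,y) = (x,y)` whenever `‖x‖ > 1` or `‖y‖ > 1`. -/
lemma norm_mulVec_orth (m : ℕ) (U : Matrix.orthogonalGroup (Fin m) ℝ)
    (v w : EuclideanSpace ℝ (Fin m))
    (hw : ∀ i, w i = (U : Matrix (Fin m) (Fin m) ℝ).mulVec v i) : ‖w‖ = ‖v‖ := by
  have h : star (U : Matrix (Fin m) (Fin m) ℝ) * (U : Matrix (Fin m) (Fin m) ℝ) = 1 := U.2.1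
  rw [← Real.sqrt_sq (norm_nonneg w), ← Real.sqrt_sq (norm_nonneg v)]
  congr 1
  rw [← real_inner_self_eq_norm_sq, ← real_inner_self_eq_norm_sq]
  simp only [PiLp.inner_apply, RCLike.inner_apply, conj_trivial, hw]
  have hd : ∀ (a b : Fin m → ℝ), (∑ i, a i * b i) = dotProduct a b := fun a b => rfl
  rw [hd, hd]
  calc dotProduct ((U : Matrix (Fin m) (Fin m) ℝ).mulVec v)
        ((U : Matrix (Fin m) (Fin m) ℝ).mulVec v)
      = dotProduct v ((star (U : Matrix (Fin m) (Fin m) ℝ) *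
          (U : Matrix (Fin m) (Fin m) ℝ)).mulVec v) := by
        rw [← Matrix.mulVec_mulVec, Matrix.star_eq_conjTranspose,
          Matrix.conjTranspose_eq_transpose_of_trivial,
          dotProduct_mulVec v ((U : Matrix (Fin m) (Fin m) ℝ)ᵀ),
          Matrix.vecMul_transpose]
    _ = dotProduct v v := by rw [h, Matrix.one_mulVec]

lemma inv_mulVec_mulVec (m : ℕ) (U : Matrix.orthogonalGroup (Fin m) ℝ) (v : Fin m → ℝ) :
    ((U : Matrix (Fin m) (Fin m) ℝ))⁻¹.mulVec
      ((U : Matrix (Fin m) (Fin m) ℝ).mulVec v) = v := by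
  rw [Matrix.mulVec_mulVec,
    Matrix.nonsing_inv_mul _ (Matrix.UnitaryGroup.det_isUnit U), Matrix.one_mulVec]

theorem statement3 (m : ℕ)
    (A B : EuclideanSpace ℝ (Fin m) → Matrix.orthogonalGroup (Fin m) ℝ)
    (hA : ∀ x : EuclideanSpace ℝ (Fin m), 1 ≤ ‖x‖ → A x = 1)
    (hB : ∀ y : EuclideanSpace ℝ (Fin m), 1 ≤ ‖y‖ → B y = 1)
    (x y : EuclideanSpace ℝ (Fin m)) (hxy : 1 < ‖x‖ ∨ 1 < ‖y‖) :
    mmCommutator m A B (x, y) = (x, y) := by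
  rcases hxy with hx | hy
  · have hAx : A x = 1 := hA x hx.le
    have hA2 : A (WithLp.toLp 2 ((B y : Matrix (Fin m) (Fin m) ℝ).mulVec x : Fin m → ℝ)) = 1 :=
      hA _ (hx.le.trans_eq (norm_mulVec_orth m (B y) x _ (fun _ => rfl)).symm)
    simp only [mmCommutator, Function.comp_apply, PhiMap, PsiMap, PhiMapInv, PsiMapInv,
      hAx, Submonoid.coe_one, Matrix.one_mulVec, inv_one, hA2]
    rw [inv_mulVec_mulVec m (B y) x]
  · have hBy : B y = 1 := hB y hy.le
    have hB2 : B (WithLp.toLp 2 ((A x : Matrix (Fin m) (Fin m) ℝ).mulVec y : Fin m → ℝ)) = 1 :=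
      hB _ (hy.le.trans_eq (norm_mulVec_orth m (A x) y _ (fun _ => rfl)).symm)
    simp only [mmCommutator, Function.comp_apply, PhiMap, PsiMap, PhiMapInv, PsiMapInv,
      hBy, hB2, Submonoid.coe_one, Matrix.one_mulVec, inv_one]
    rw [inv_mulVec_mulVec m (A x) y, hBy, Submonoid.coe_one, inv_one, Matrix.one_mulVec]
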